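/- arXiv:2104.00003 — 4 statements merged into one kernel-verified Lean document; each statement's English description precedes it below -/
import Mathlib

section
/- Let C be a real-valued function on d×d complex matrices that is bounded on the set D of density matrices, and let Θ be a quantum channel. If Θ is a CMIO for C, then 𝔠_C(Θ) = 0. If Θ is not a CMIO for C, then 𝔠_C(Θ) = P_C(Θ; id) and this quantity is strictly positive, where id is the identity channel. -/
open Matrix ComplexOrder

/-- A density matrix: positive semidefinite with trace 1. -/
def IsDensity (d : ℕ) (ρ : Matrix (Fin d) (Fin d) ℂ) : Prop :=
  ρ.PosSemidef ∧ ρ.trace = 1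

/-- A quantum channel: a map admitting a Kraus decomposition. -/
def IsChannel (d : ℕ) (Λ : Matrix (Fin d) (Fin d) ℂ → Matrix (Fin d) (Fin d) ℂ) : Prop :=
  ∃ (m : ℕ) (K : Fin m → Matrix (Fin d) (Fin d) ℂ),
    (∀ ρ, Λ ρ = ∑ i, K i * ρ * (K i)ᴴ) ∧ (∑ i, (K i)ᴴ * K i) = 1

/-- A channel is an incoherent operation induced by the coherence measure `C` (CMIO for `C`)
if it does not increase `C` on any density matrix. -/
def IsCMIO (d : ℕ) (C : Matrix (Fin d) (Fin d) ℂ → ℝ)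
    (Λ : Matrix (Fin d) (Fin d) ℂ → Matrix (Fin d) (Fin d) ℂ) : Prop :=
  ∀ ρ, IsDensity d ρ → C (Λ ρ) ≤ C ρ

/-- `C` is bounded on the set of density matrices. -/
def BoundedOnD (d : ℕ) (C : Matrix (Fin d) (Fin d) ℂ → ℝ) : Prop :=
  ∃ M : ℝ, ∀ ρ, IsDensity d ρ → |C ρ| ≤ M

/-- `C` is convex on density matrices. -/
def ConvexOnD (d : ℕ) (C : Matrix (Fin d) (Fin d) ℂ → ℝ) : Prop :=
  ∀ t : ℝ, t ∈ Set.Icc (0 : ℝ) 1 → ∀ ρ σ : Matrix (Fin d) (Fin d) ℂ,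
    IsDensity d ρ → IsDensity d σ →
    C (t • ρ + (1 - t) • σ) ≤ t * C ρ + (1 - t) * C σ

/-- The power of the channel `Θ` over the channel `Λ`:
`P_C(Θ; Λ) = sup_{ρ ∈ D} (C(Θ(ρ)) − C(Λ(ρ)))`. -/
noncomputable def power (d : ℕ) (C : Matrix (Fin d) (Fin d) ℂ → ℝ)
    (Θ Λ : Matrix (Fin d) (Fin d) ℂ → Matrix (Fin d) (Fin d) ℂ) : ℝ :=
  sSup ((fun ρ => C (Θ ρ) - C (Λ ρ)) '' {ρ | IsDensity d ρ})

/-- The dynamical coherence measure `𝔠_C(Θ) = inf_{Λ channel, CMIO for C} |P_C(Θ; Λ)|`. -/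
noncomputable def dynCoh (d : ℕ) (C : Matrix (Fin d) (Fin d) ℂ → ℝ)
    (Θ : Matrix (Fin d) (Fin d) ℂ → Matrix (Fin d) (Fin d) ℂ) : ℝ :=
  sInf ((fun Λ => |power d C Θ Λ|) '' {Λ | IsChannel d Λ ∧ IsCMIO d C Λ})

lemma channel_density {d : ℕ} {Λ : Matrix (Fin d) (Fin d) ℂ → Matrix (Fin d) (Fin d) ℂ}
    (hΛ : IsChannel d Λ) {ρ} (hρ : IsDensity d ρ) : IsDensity d (Λ ρ) := by
  obtain ⟨m, K, hmap, hsum⟩ := hΛ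
  constructor
  · rw [hmap ρ]
    refine Finset.sum_induction _ _ (fun a b ha hb => ha.add hb) Matrix.PosSemidef.zero ?_
    intro i _
    exact hρ.1.mul_mul_conjTranspose_same (K i)
  · rw [hmap ρ, Matrix.trace_sum]
    have h : ∀ i : Fin m, (K i * ρ * (K i)ᴴ).trace = ((K i)ᴴ * K i * ρ).trace := fun i =>
      Matrix.trace_mul_cycle (K i) ρ (K i)ᴴ
    simp_rw [h]
    rw [← Matrix.trace_sum, ← Finset.sum_mul, hsum, one_mul, hρ.2]

lemma id_channel (d : ℕ) : IsChannel d id := by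
  refine ⟨1, fun _ => 1, fun ρ => ?_, by simp⟩
  simp

theorem stmt5 (d : ℕ) (C : Matrix (Fin d) (Fin d) ℂ → ℝ) (hb : BoundedOnD d C)
    (Θ : Matrix (Fin d) (Fin d) ℂ → Matrix (Fin d) (Fin d) ℂ) (hΘ : IsChannel d Θ) :
    (IsCMIO d C Θ → dynCoh d C Θ = 0) ∧
    (¬ IsCMIO d C Θ → dynCoh d C Θ = power d C Θ id ∧ 0 < power d C Θ id) := by
  obtain ⟨M, hM⟩ := hb
  have hSnonneg : ∀ x ∈ ((fun Λ => |power d C Θ Λ|) '' {Λ | IsChannel d Λ ∧ IsCMIO d C Λ}),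
      (0:ℝ) ≤ x := by rintro x ⟨Λ, _, rfl⟩; exact abs_nonneg _
  have hbdd : BddBelow ((fun Λ => |power d C Θ Λ|) '' {Λ | IsChannel d Λ ∧ IsCMIO d C Λ}) :=
    ⟨0, fun x hx => hSnonneg x hx⟩
  constructor
  · intro hCM
    have hpow : power d C Θ Θ = 0 := by
      have hsub : (fun ρ => C (Θ ρ) - C (Θ ρ)) '' {ρ | IsDensity d ρ} ⊆ {0} := by
        rintro x ⟨ρ, _, rfl⟩; simp
      unfold power
      rcases Set.subset_singleton_iff_eq.mp hsub with h | h
      · rw [h, Real.sSup_empty]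
      · rw [h, csSup_singleton]
    have h0 : (0:ℝ) ∈ ((fun Λ => |power d C Θ Λ|) '' {Λ | IsChannel d Λ ∧ IsCMIO d C Λ}) :=
      ⟨Θ, ⟨hΘ, hCM⟩, by show |power d C Θ Θ| = 0; rw [hpow, abs_zero]⟩
    exact le_antisymm (csInf_le hbdd h0) (le_csInf ⟨0, h0⟩ hSnonneg)
  · intro hnot
    obtain ⟨ρ₀, hρ₀, hlt⟩ : ∃ ρ, IsDensity d ρ ∧ C ρ < C (Θ ρ) := by
      by_contra h; push_neg at h; exact hnot fun ρ hρ => h ρ hρ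
    have hba : ∀ Λ : Matrix (Fin d) (Fin d) ℂ → Matrix (Fin d) (Fin d) ℂ, IsChannel d Λ →
        BddAbove ((fun ρ => C (Θ ρ) - C (Λ ρ)) '' {ρ | IsDensity d ρ}) := by
      intro Λ hΛ
      refine ⟨M + M, ?_⟩
      rintro x ⟨ρ, hρ, rfl⟩
      have h1 := abs_le.mp (hM _ (channel_density hΘ hρ))
      have h2 := abs_le.mp (hM _ (channel_density hΛ hρ))
      simp only []
      linarith [h1.1, h1.2, h2.1, h2.2]
    have hidC : IsChannel d id := id_channel d
    have hpos : 0 < power d C Θ id := by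
      have hmem : C (Θ ρ₀) - C (id ρ₀) ∈
          ((fun ρ => C (Θ ρ) - C (id ρ)) '' {ρ | IsDensity d ρ}) :=
        Set.mem_image_of_mem _ hρ₀
      have hle := le_csSup (hba id hidC) hmem
      unfold power
      simp only [id] at hle ⊢
      linarith
    have hle : ∀ x ∈ ((fun Λ => |power d C Θ Λ|) '' {Λ | IsChannel d Λ ∧ IsCMIO d C Λ}),
        power d C Θ id ≤ x := by
      rintro x ⟨Λ, ⟨hΛc, hΛm⟩, rfl⟩
      have key : power d C Θ id ≤ power d C Θ Λ := by
        unfold power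
        refine csSup_le ⟨C (Θ ρ₀) - C (id ρ₀), Set.mem_image_of_mem _ hρ₀⟩ ?_
        rintro x ⟨ρ, hρ, rfl⟩
        have hC : C (Λ ρ) ≤ C ρ := hΛm ρ hρ
        calc C (Θ ρ) - C (id ρ) ≤ C (Θ ρ) - C (Λ ρ) := by simp only [id_eq]; linarith
          _ ≤ sSup ((fun ρ => C (Θ ρ) - C (Λ ρ)) '' {ρ | IsDensity d ρ}) :=
            le_csSup (hba Λ hΛc) (Set.mem_image_of_mem _ hρ)
      exact key.trans (le_abs_self _)
    have hmemid : |power d C Θ id| ∈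
        ((fun Λ => |power d C Θ Λ|) '' {Λ | IsChannel d Λ ∧ IsCMIO d C Λ}) :=
      ⟨id, ⟨hidC, fun ρ _ => le_refl _⟩, rfl⟩
    have habs : |power d C Θ id| = power d C Θ id := abs_of_pos hpos
    refine ⟨le_antisymm ?_ (le_csInf ⟨_, hmemid⟩ hle), hpos⟩
    calc dynCoh d C Θ ≤ |power d C Θ id| := csInf_le hbdd hmemid
      _ = power d C Θ id := habs
end

section
/- (Convexity of the dynamical coherence measure.) Let C be a real-valued function on d×d complex matrices that is bounded on the set D of density matrices and convex, i.e. C(tρ + (1−t)σ) ≤ t·C(ρ) + (1−t)·C(σ) for all t ∈ [0,1] and density matrices ρ, σ. Then for all quantum channels Θ₁, Θ₂ and all t ∈ [0,1], 𝔠_C(t·Θ₁ + (1−t)·Θ₂) ≤ t·𝔠_C(Θ₁) + (1−t)·𝔠_C(Θ₂). -/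
open Matrix ComplexOrder

/-! ### Auxiliary lemmas -/

/-- Nonnegative real scalar multiples of PSD matrices are PSD. -/
lemma aux_psd_smul {d : ℕ} {M : Matrix (Fin d) (Fin d) ℂ} (h : M.PosSemidef) {t : ℝ}
    (ht : 0 ≤ t) : (t • M).PosSemidef := by
  constructor
  · show (t • M)ᴴ = t • M
    rw [conjTranspose_smul, star_trivial, h.1.eq]
  · intro x
    exact (h.smul ht).2 x

/-- A convex combination of density matrices is a density matrix. -/
lemma aux_density_comb {d : ℕ} {ρ σ : Matrix (Fin d) (Fin d) ℂ} {t : ℝ}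
    (ht : t ∈ Set.Icc (0 : ℝ) 1) (hρ : IsDensity d ρ) (hσ : IsDensity d σ) :
    IsDensity d (t • ρ + (1 - t) • σ) := by
  obtain ⟨ht0, ht1⟩ := ht
  refine ⟨(aux_psd_smul hρ.1 ht0).add (aux_psd_smul hσ.1 (by linarith)), ?_⟩
  rw [trace_add, trace_smul, trace_smul, hρ.2, hσ.2]
  simp [Complex.real_smul]

/-- A channel maps density matrices to density matrices. -/
lemma aux_channel_density {d : ℕ} {Λ : Matrix (Fin d) (Fin d) ℂ → Matrix (Fin d) (Fin d) ℂ}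
    (hΛ : IsChannel d Λ) {ρ : Matrix (Fin d) (Fin d) ℂ} (hρ : IsDensity d ρ) :
    IsDensity d (Λ ρ) := by
  obtain ⟨m, K, hK, hnorm⟩ := hΛ
  rw [hK]
  constructor
  · refine Finset.sum_induction _ (fun A : Matrix (Fin d) (Fin d) ℂ => A.PosSemidef)
      (fun a b ha hb => ha.add hb)
      Matrix.PosSemidef.zero (fun i _ => hρ.1.mul_mul_conjTranspose_same (K i))
  · rw [trace_sum]
    have h1 : ∀ i : Fin m, (K i * ρ * (K i)ᴴ).trace = ((K i)ᴴ * K i * ρ).trace := by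
      intro i; rw [trace_mul_cycle, mul_assoc]
    simp_rw [h1, ← trace_sum, ← Finset.sum_mul, hnorm, one_mul, hρ.2]

/-- The identity map is a channel. -/
lemma aux_id_channel (d : ℕ) : IsChannel d (fun ρ => ρ) := by
  refine ⟨1, fun _ => 1, fun ρ => ?_, by simp⟩
  simp

/-- Boundedness of the power set. -/
lemma aux_bddAbove {d : ℕ} {C : Matrix (Fin d) (Fin d) ℂ → ℝ} (hb : BoundedOnD d C)
    {Θ Λ : Matrix (Fin d) (Fin d) ℂ → Matrix (Fin d) (Fin d) ℂ}
    (hΘ : ∀ ρ, IsDensity d ρ → IsDensity d (Θ ρ))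
    (hΛ : ∀ ρ, IsDensity d ρ → IsDensity d (Λ ρ)) :
    BddAbove ((fun ρ => C (Θ ρ) - C (Λ ρ)) '' {ρ | IsDensity d ρ}) := by
  obtain ⟨M, hM⟩ := hb
  refine ⟨M + M, ?_⟩
  rintro x ⟨ρ, hρ, rfl⟩
  have h1 := hM _ (hΘ ρ hρ)
  have h2 := hM _ (hΛ ρ hρ)
  have := abs_le.mp h1
  have := abs_le.mp h2
  simp only
  linarith [(abs_le.mp h1).2, (abs_le.mp h2).1]

/-- The identity is the optimal comparison channel: for any CMIO `Λ`,
`power Θ id ≤ power Θ Λ`. -/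
lemma aux_power_id_le {d : ℕ} {C : Matrix (Fin d) (Fin d) ℂ → ℝ} (hb : BoundedOnD d C)
    {Θ Λ : Matrix (Fin d) (Fin d) ℂ → Matrix (Fin d) (Fin d) ℂ}
    (hΘ : ∀ ρ, IsDensity d ρ → IsDensity d (Θ ρ))
    (hΛc : IsChannel d Λ) (hΛ : IsCMIO d C Λ) :
    power d C Θ (fun ρ => ρ) ≤ power d C Θ Λ := by
  rcases Set.eq_empty_or_nonempty {ρ | IsDensity d ρ} with hD | hD
  · unfold power; rw [hD]; simp
  · unfold power
    refine csSup_le (hD.image _) ?_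
    rintro x ⟨ρ, hρ, rfl⟩
    have h1 : C (Θ ρ) - C ρ ≤ C (Θ ρ) - C (Λ ρ) := by
      have := hΛ ρ hρ; linarith
    refine h1.trans (le_csSup (aux_bddAbove hb hΘ (fun ρ hρ => aux_channel_density hΛc hρ)) ?_)
    exact ⟨ρ, hρ, rfl⟩

/-- The power over the identity channel is nonnegative. -/
lemma aux_power_id_nonneg {d : ℕ} {C : Matrix (Fin d) (Fin d) ℂ → ℝ} (hb : BoundedOnD d C)
    {Θ : Matrix (Fin d) (Fin d) ℂ → Matrix (Fin d) (Fin d) ℂ}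
    (hΘ : ∀ ρ, IsDensity d ρ → IsDensity d (Θ ρ)) :
    0 ≤ power d C Θ (fun ρ => ρ) := by
  rcases Set.eq_empty_or_nonempty {ρ | IsDensity d ρ} with hD | hD
  · unfold power; rw [hD]; simp
  · obtain ⟨M, hM⟩ := hb
    refine le_of_forall_pos_le_add ?_
    intro ε hε
    have hne : (C '' {ρ | IsDensity d ρ}).Nonempty := hD.image _
    have hbb : BddBelow (C '' {ρ | IsDensity d ρ}) := by
      refine ⟨-M, ?_⟩
      rintro x ⟨ρ, hρ, rfl⟩
      exact (abs_le.mp (hM ρ hρ)).1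
    obtain ⟨a, ⟨ρ, hρ, rfl⟩, ha⟩ := Real.lt_sInf_add_pos hne hε
    have h1 : sInf (C '' {ρ | IsDensity d ρ}) ≤ C (Θ ρ) :=
      csInf_le hbb ⟨Θ ρ, hΘ ρ hρ, rfl⟩
    have h2 : C (Θ ρ) - C ρ ≤ power d C Θ (fun ρ => ρ) :=
      le_csSup (aux_bddAbove ⟨M, hM⟩ hΘ (fun _ h => h)) ⟨ρ, hρ, rfl⟩
    linarith

theorem stmt7 (d : ℕ) (C : Matrix (Fin d) (Fin d) ℂ → ℝ)
    (hb : BoundedOnD d C) (hconv : ConvexOnD d C)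
    (Θ₁ Θ₂ : Matrix (Fin d) (Fin d) ℂ → Matrix (Fin d) (Fin d) ℂ)
    (hΘ₁ : IsChannel d Θ₁) (hΘ₂ : IsChannel d Θ₂)
    (t : ℝ) (ht : t ∈ Set.Icc (0 : ℝ) 1) :
    dynCoh d C (fun ρ => t • Θ₁ ρ + (1 - t) • Θ₂ ρ) ≤
      t * dynCoh d C Θ₁ + (1 - t) * dynCoh d C Θ₂ := by
  obtain ⟨ht0, ht1⟩ := ht
  set Θ : Matrix (Fin d) (Fin d) ℂ → Matrix (Fin d) (Fin d) ℂ :=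
    fun ρ => t • Θ₁ ρ + (1 - t) • Θ₂ ρ with hΘdef
  have hΘ₁D : ∀ ρ, IsDensity d ρ → IsDensity d (Θ₁ ρ) := fun ρ hρ => aux_channel_density hΘ₁ hρ
  have hΘ₂D : ∀ ρ, IsDensity d ρ → IsDensity d (Θ₂ ρ) := fun ρ hρ => aux_channel_density hΘ₂ hρ
  have hΘD : ∀ ρ, IsDensity d ρ → IsDensity d (Θ ρ) := fun ρ hρ =>
    aux_density_comb ⟨ht0, ht1⟩ (hΘ₁D ρ hρ) (hΘ₂D ρ hρ)
  have hidmem : ∀ Ξ : Matrix (Fin d) (Fin d) ℂ → Matrix (Fin d) (Fin d) ℂ,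
      |power d C Ξ (fun ρ => ρ)| ∈
        ((fun Λ => |power d C Ξ Λ|) '' {Λ | IsChannel d Λ ∧ IsCMIO d C Λ}) :=
    fun Ξ => ⟨fun ρ => ρ, ⟨aux_id_channel d, fun ρ _ => le_refl _⟩, rfl⟩
  -- Step 1 : dynCoh Θ ≤ power Θ id
  have step1 : dynCoh d C Θ ≤ power d C Θ (fun ρ => ρ) := by
    have h1 : dynCoh d C Θ ≤ |power d C Θ (fun ρ => ρ)| := by
      refine csInf_le ⟨0, ?_⟩ (hidmem Θ)
      rintro x ⟨Λ, _, rfl⟩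
      exact abs_nonneg _
    rwa [abs_of_nonneg (aux_power_id_nonneg hb hΘD)] at h1
  -- Step 2 : power Θ id ≤ t * power Θ₁ id + (1-t) * power Θ₂ id
  have step2 : power d C Θ (fun ρ => ρ) ≤
      t * power d C Θ₁ (fun ρ => ρ) + (1 - t) * power d C Θ₂ (fun ρ => ρ) := by
    rcases Set.eq_empty_or_nonempty {ρ | IsDensity d ρ} with hD | hD
    · unfold power; rw [hD]; simp
    · unfold power
      refine csSup_le (hD.image _) ?_
      rintro x ⟨ρ, hρ, rfl⟩
      have hc := hconv t ⟨ht0, ht1⟩ (Θ₁ ρ) (Θ₂ ρ) (hΘ₁D ρ hρ) (hΘ₂D ρ hρ)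
      have h1 : C (Θ₁ ρ) - C ρ ≤ power d C Θ₁ (fun ρ => ρ) :=
        le_csSup (aux_bddAbove hb hΘ₁D (fun _ h => h)) ⟨ρ, hρ, rfl⟩
      have h2 : C (Θ₂ ρ) - C ρ ≤ power d C Θ₂ (fun ρ => ρ) :=
        le_csSup (aux_bddAbove hb hΘ₂D (fun _ h => h)) ⟨ρ, hρ, rfl⟩
      have h1' := mul_le_mul_of_nonneg_left h1 ht0
      have h2' := mul_le_mul_of_nonneg_left h2 (by linarith : (0:ℝ) ≤ 1 - t)
      show C (Θ ρ) - C ρ ≤ t * power d C Θ₁ (fun ρ => ρ) + (1 - t) * power d C Θ₂ (fun ρ => ρ)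
      have hcc : C (Θ ρ) ≤ t * C (Θ₁ ρ) + (1 - t) * C (Θ₂ ρ) := hc
      linarith
  -- Step 3 : power Θᵢ id ≤ dynCoh Θᵢ
  have step3 : ∀ Ξ : Matrix (Fin d) (Fin d) ℂ → Matrix (Fin d) (Fin d) ℂ,
      (∀ ρ, IsDensity d ρ → IsDensity d (Ξ ρ)) →
      power d C Ξ (fun ρ => ρ) ≤ dynCoh d C Ξ := by
    intro Ξ hΞ
    refine le_csInf ⟨_, hidmem Ξ⟩ ?_
    rintro x ⟨Λ, ⟨hΛc, hΛ⟩, rfl⟩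
    exact (aux_power_id_le hb hΞ hΛc hΛ).trans (le_abs_self _)
  have h3₁ := step3 Θ₁ hΘ₁D
  have h3₂ := step3 Θ₂ hΘ₂D
  have h3₁' := mul_le_mul_of_nonneg_left h3₁ ht0
  have h3₂' := mul_le_mul_of_nonneg_left h3₂ (by linarith : (0:ℝ) ≤ 1 - t)
  linarith
end

section
/- Let ψ, ψ' be orthonormal vectors in ℂ², let λ ∈ [0,1], and set ρ = λ|ψ⟩⟨ψ| + (1−λ)|ψ'⟩⟨ψ'|. Then the relative entropy of POVM-based coherence satisfies 3/2 − h(λ)/2 ≤ C_{E,r}(ρ) ≤ 2 − h(λ); equivalently, 3/2 + h(λ)/2 ≤ H[{p_k(ρ)}] ≤ 2. -/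
open Matrix ComplexOrder

/-- The POVM vectors `|φ_k⟩ = (|0⟩ + i^k |1⟩)/√2` for `k = 0,1,2,3`. -/
noncomputable def phiv (k : Fin 4) : Fin 2 → ℂ :=
  ![(1 : ℂ) / Real.sqrt 2, Complex.I ^ (k : ℕ) / Real.sqrt 2]

/-- The outer product `|ψ⟩⟨ψ|`. -/
def outer (ψ : Fin 2 → ℂ) : Matrix (Fin 2) (Fin 2) ℂ :=
  vecMulVec ψ (star ψ)

/-- The POVM outcome probabilities `p_k(ρ) = (1/2)⟨φ_k|ρ|φ_k⟩`. -/
noncomputable def pk (ρ : Matrix (Fin 2) (Fin 2) ℂ) (k : Fin 4) : ℝ :=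
  (star (phiv k) ⬝ᵥ ρ.mulVec (phiv k)).re / 2

/-- `-x log₂ x`, with the convention `0 log₂ 0 = 0`. -/
noncomputable def ent2 (x : ℝ) : ℝ := -(x * Real.logb 2 x)

/-- The Shannon entropy (base 2) of the POVM outcome distribution of `ρ`. -/
noncomputable def H4 (ρ : Matrix (Fin 2) (Fin 2) ℂ) : ℝ := ∑ k : Fin 4, ent2 (pk ρ k)

/-- The binary entropy `h(λ)` (base 2). -/
noncomputable def binEnt (l : ℝ) : ℝ := ent2 l + ent2 (1 - l)

/-- A qubit density matrix: positive semidefinite with trace 1. -/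
def IsDensity2 (ρ : Matrix (Fin 2) (Fin 2) ℂ) : Prop :=
  ρ.PosSemidef ∧ ρ.trace = 1


noncomputable def Dl (t : ℝ) : ℝ := (1+t) * Real.log (1+t) + (1-t) * Real.log (1-t)



lemma xlogx_ge (x : ℝ) (hx : 0 ≤ x) : x - 1 ≤ x * Real.log x := by
  rcases eq_or_lt_of_le hx with h | h
  · simp [← h]
  · have h1 : Real.log x⁻¹ ≤ x⁻¹ - 1 := Real.log_le_sub_one_of_pos (by positivity)
    rw [Real.log_inv] at h1
    have h2 : 1 - x⁻¹ ≤ Real.log x := by linarith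
    nlinarith [mul_le_mul_of_nonneg_left h2 hx, mul_inv_cancel₀ (ne_of_gt h)]

lemma Dl_nonneg {t : ℝ} (h1 : -1 ≤ t) (h2 : t ≤ 1) : 0 ≤ Dl t := by
  have a := xlogx_ge (1+t) (by linarith)
  have b := xlogx_ge (1-t) (by linarith)
  unfold Dl; linarith

lemma Dl_zero : Dl 0 = 0 := by simp [Dl]

lemma Dl_even (t : ℝ) : Dl (-t) = Dl t := by
  unfold Dl
  rw [show (1:ℝ) + -t = 1 - t by ring, show (1:ℝ) - -t = 1 + t by ring]
  ring

lemma Dl_continuous : Continuous Dl := by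
  have h := Real.continuous_mul_log
  have h1 : Continuous fun t : ℝ => (1+t) * Real.log (1+t) :=
    h.comp (continuous_const.add continuous_id)
  have h2 : Continuous fun t : ℝ => (1-t) * Real.log (1-t) :=
    h.comp (continuous_const.sub continuous_id)
  exact h1.add h2

lemma hasDerivAt_log1p (x : ℝ) (h1 : -1 < x) : HasDerivAt (fun t : ℝ => Real.log (1+t)) (1/(1+x)) x := by
  have := ((hasDerivAt_id x).const_add 1).log (show (1:ℝ)+x ≠ 0 by linarith)
  simpa using this

lemma hasDerivAt_log1m (x : ℝ) (h2 : x < 1) : HasDerivAt (fun t : ℝ => Real.log (1-t)) (-(1/(1-x))) x := by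
  have := ((hasDerivAt_id x).const_sub 1).log (show (1:ℝ)-x ≠ 0 by linarith)
  simpa [neg_div] using this

lemma hasDerivAt_Dl (x : ℝ) (h1 : -1 < x) (h2 : x < 1) :
    HasDerivAt Dl (Real.log (1+x) - Real.log (1-x)) x := by
  have ha : HasDerivAt (fun t : ℝ => (1+t) * Real.log (1+t))
      (1 * Real.log (1+x) + (1+x) * (1/(1+x))) x :=
    (((hasDerivAt_id x).const_add 1)).mul (hasDerivAt_log1p x h1)
  have hb : HasDerivAt (fun t : ℝ => (1-t) * Real.log (1-t))
      ((-1) * Real.log (1-x) + (1-x) * (-(1/(1-x)))) x :=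
    (((hasDerivAt_id x).const_sub 1)).mul (hasDerivAt_log1m x h2)
  have := ha.add hb
  have e1 : (1+x) ≠ 0 := by linarith
  have e2 : (1-x) ≠ 0 := by linarith
  refine this.congr_deriv ?_
  field_simp
  ring

noncomputable def chif (t : ℝ) : ℝ := 2*t/(1-t^2) - (Real.log (1+t) - Real.log (1-t))

lemma hasDerivAt_chif (x : ℝ) (h1 : -1 < x) (h2 : x < 1) :
    HasDerivAt chif (4*x^2/(1-x^2)^2) x := by
  have e : (1 - x^2) ≠ 0 := by nlinarith
  have hq : HasDerivAt (fun t : ℝ => 2*t/(1-t^2))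
      ((2 * 1 * (1 - x ^ 2) - 2 * x * -(↑2 * x ^ (2 - 1))) / (1 - x ^ 2) ^ 2) x :=
    (((hasDerivAt_id x).const_mul 2)).div ((hasDerivAt_pow 2 x).const_sub 1) e
  have := hq.sub ((hasDerivAt_log1p x h1).sub (hasDerivAt_log1m x h2))
  refine this.congr_deriv ?_
  have e1 : (1+x) ≠ 0 := by linarith
  have e2 : (1-x) ≠ 0 := by linarith
  field_simp
  ring

lemma chif_nonneg {t : ℝ} (h0 : 0 ≤ t) (h1 : t < 1) : 0 ≤ chif t := by
  have hmono : MonotoneOn chif (Set.Ico 0 1) := by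
    apply monotoneOn_of_deriv_nonneg (convex_Ico 0 1)
    · intro x hx
      exact (hasDerivAt_chif x (by linarith [hx.1]) hx.2).continuousAt.continuousWithinAt
    · intro x hx
      rw [interior_Ico] at hx
      exact (hasDerivAt_chif x (by linarith [hx.1]) hx.2).differentiableAt.differentiableWithinAt
    · intro x hx
      rw [interior_Ico] at hx
      rw [(hasDerivAt_chif x (by linarith [hx.1]) hx.2).deriv]
      positivity
  have h00 : chif 0 = 0 := by simp [chif]
  have := hmono (Set.mem_Ico.2 ⟨le_refl 0, by norm_num⟩) (Set.mem_Ico.2 ⟨h0, h1⟩) h0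
  rw [h00] at this
  exact this

noncomputable def psif (t : ℝ) : ℝ := (2+t) * Real.log (1+t) + (2-t) * Real.log (1-t)

lemma hasDerivAt_psif (x : ℝ) (h1 : -1 < x) (h2 : x < 1) :
    HasDerivAt psif ((Real.log (1+x) - Real.log (1-x)) - 2*x/(1-x^2)) x := by
  have ha : HasDerivAt (fun t : ℝ => (2+t) * Real.log (1+t))
      (1 * Real.log (1+x) + (2+x) * (1/(1+x))) x :=
    (((hasDerivAt_id x).const_add 2)).mul (hasDerivAt_log1p x h1)
  have hb : HasDerivAt (fun t : ℝ => (2-t) * Real.log (1-t))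
      ((-1) * Real.log (1-x) + (2-x) * (-(1/(1-x)))) x :=
    (((hasDerivAt_id x).const_sub 2)).mul (hasDerivAt_log1m x h2)
  have := ha.add hb
  refine this.congr_deriv ?_
  have e1 : (1+x) ≠ 0 := by linarith
  have e2 : (1-x) ≠ 0 := by linarith
  have e : (1 - x^2) ≠ 0 := by nlinarith
  field_simp
  ring

lemma psif_nonpos {t : ℝ} (h0 : 0 ≤ t) (h1 : t < 1) : psif t ≤ 0 := by
  have hmono : AntitoneOn psif (Set.Ico 0 1) := by
    apply antitoneOn_of_deriv_nonpos (convex_Ico 0 1)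
    · intro x hx
      exact (hasDerivAt_psif x (by linarith [hx.1]) hx.2).continuousAt.continuousWithinAt
    · intro x hx
      rw [interior_Ico] at hx
      exact (hasDerivAt_psif x (by linarith [hx.1]) hx.2).differentiableAt.differentiableWithinAt
    · intro x hx
      rw [interior_Ico] at hx
      rw [(hasDerivAt_psif x (by linarith [hx.1]) hx.2).deriv]
      have := chif_nonneg (le_of_lt hx.1) hx.2
      unfold chif at this
      linarith
  have h00 : psif 0 = 0 := by simp [psif]
  have := hmono (Set.mem_Ico.2 ⟨le_refl 0, by norm_num⟩) (Set.mem_Ico.2 ⟨h0, h1⟩) h0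
  rw [h00] at this
  exact this

lemma q_mono : MonotoneOn (fun t => Dl t / t^2) (Set.Ioc (0:ℝ) 1) := by
  apply monotoneOn_of_deriv_nonneg (convex_Ioc 0 1)
  · exact (Dl_continuous.continuousOn).div (continuousOn_pow 2)
      (fun x hx => pow_ne_zero 2 (ne_of_gt hx.1))
  all_goals intro x hx
  all_goals rw [interior_Ioc] at hx
  · have hd := (hasDerivAt_Dl x (by linarith [hx.1]) hx.2).div (hasDerivAt_pow 2 x)
      (pow_ne_zero 2 (ne_of_gt hx.1))
    exact hd.differentiableAt.differentiableWithinAt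
  · have hd := (hasDerivAt_Dl x (by linarith [hx.1]) hx.2).div (hasDerivAt_pow 2 x)
      (pow_ne_zero 2 (ne_of_gt hx.1))
    rw [show (fun t : ℝ => Dl t / t^2) = (Dl / fun x => x^2) from rfl, hd.deriv]
    have hnum : (Real.log (1+x) - Real.log (1-x)) * x^2 - Dl x * ((2:ℕ)*x^(2-1)) = x * (-psif x) := by
      unfold Dl psif; push_cast; ring
    rw [hnum]
    have hp := psif_nonpos (le_of_lt hx.1) hx.2
    have : 0 ≤ x * (-psif x) := mul_nonneg (le_of_lt hx.1) (by linarith)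
    positivity

lemma core_single {a r : ℝ} (h0 : 0 ≤ a) (har : a ≤ r) (hr : r ≤ 1) :
    r^2 * Dl a ≤ a^2 * Dl r := by
  rcases eq_or_lt_of_le h0 with h | h
  · rw [← h]; simp [Dl_zero]
  · have hq := q_mono (Set.mem_Ioc.2 ⟨h, le_trans har hr⟩)
      (Set.mem_Ioc.2 ⟨lt_of_lt_of_le h har, hr⟩) har
    have ha2 : (0:ℝ) < a^2 := pow_pos h 2
    have hr2 : (0:ℝ) < r^2 := pow_pos (lt_of_lt_of_le h har) 2
    rw [div_le_div_iff₀ ha2 hr2] at hq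
    linarith

lemma Dl_abs (a : ℝ) : Dl |a| = Dl a := by
  rcases abs_cases a with ⟨h, _⟩ | ⟨h, _⟩
  · rw [h]
  · rw [h, Dl_even]

lemma core2 {a b r : ℝ} (hab : a^2 + b^2 ≤ r^2) (hr0 : 0 ≤ r) (hr1 : r ≤ 1) :
    Dl a + Dl b ≤ Dl r := by
  have ha : |a| ≤ r := abs_le.2 ⟨by nlinarith, by nlinarith⟩
  have hb : |b| ≤ r := abs_le.2 ⟨by nlinarith, by nlinarith⟩
  rcases eq_or_lt_of_le hr0 with h | h
  · have ha0 : a = 0 := by nlinarith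
    have hb0 : b = 0 := by nlinarith
    rw [ha0, hb0, ← h, Dl_zero]; norm_num
  · have h1 := core_single (abs_nonneg a) ha hr1
    have h2 := core_single (abs_nonneg b) hb hr1
    rw [Dl_abs] at h1 h2
    have hDr := Dl_nonneg (by linarith : -1 ≤ r) hr1
    have habs : |a|^2 = a^2 := sq_abs a
    have hbbs : |b|^2 = b^2 := sq_abs b
    rw [habs] at h1; rw [hbbs] at h2
    have : r^2 * (Dl a + Dl b) ≤ r^2 * Dl r := by nlinarith
    have hr2 : (0:ℝ) < r^2 := pow_pos h 2
    exact le_of_mul_le_mul_left this hr2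


lemma log2_pos : (0:ℝ) < Real.log 2 := Real.log_pos (by norm_num)

lemma ent2_eq (x : ℝ) : ent2 x = -(x * Real.log x / Real.log 2) := by
  unfold ent2 Real.logb
  ring

lemma ent2_quarter {u : ℝ} (hu : 0 ≤ u) :
    ent2 (u/4) = (u * (2 * Real.log 2) - u * Real.log u) / (4 * Real.log 2) := by
  rcases eq_or_lt_of_le hu with h | h
  · rw [← h]; simp [ent2]
  · rw [ent2_eq, Real.log_div (ne_of_gt h) (by norm_num),
      show Real.log 4 = 2 * Real.log 2 by
        rw [show (4:ℝ) = 2^2 by norm_num, Real.log_pow]; push_cast; ring]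
    field_simp
    ring

lemma ent2_half {u : ℝ} (hu : 0 ≤ u) :
    ent2 (u/2) = (u * Real.log 2 - u * Real.log u) / (2 * Real.log 2) := by
  rcases eq_or_lt_of_le hu with h | h
  · rw [← h]; simp [ent2]
  · rw [ent2_eq, Real.log_div (ne_of_gt h) (by norm_num)]
    field_simp
    ring

lemma pair_id {t : ℝ} (h1 : -1 ≤ t) (h2 : t ≤ 1) :
    ent2 ((1+t)/4) + ent2 ((1-t)/4) = 1 - Dl t / (4 * Real.log 2) := by
  rw [ent2_quarter (by linarith : (0:ℝ) ≤ 1+t), ent2_quarter (by linarith : (0:ℝ) ≤ 1-t)]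
  unfold Dl
  field_simp
  ring

lemma binEnt_id {l : ℝ} (h0 : 0 ≤ l) (h1 : l ≤ 1) :
    binEnt l = 1 - Dl (2*l - 1) / (2 * Real.log 2) := by
  unfold binEnt
  rw [show l = (2*l)/2 by ring, ent2_half (by linarith : (0:ℝ) ≤ 2*l),
    show 1 - 2*l/2 = (2-2*l)/2 by ring, ent2_half (by linarith : (0:ℝ) ≤ 2-2*l)]
  unfold Dl
  rw [show 1 + (2*(2*l/2)-1) = 2*l by ring, show 1 - (2*(2*l/2)-1) = 2-2*l by ring]
  field_simp
  ring





lemma quad (ρ : Matrix (Fin 2) (Fin 2) ℂ) (k : Fin 4) :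
    star (phiv k) ⬝ᵥ ρ.mulVec (phiv k) =
      (ρ 0 0 + ρ 1 1 + Complex.I ^ (k : ℕ) * ρ 0 1
        + (starRingEnd ℂ) (Complex.I ^ (k : ℕ)) * ρ 1 0) / 2 := by
  have hs : ((Real.sqrt 2 : ℝ) : ℂ) ≠ 0 := by
    norm_cast
    positivity
  have hs2 : ((Real.sqrt 2 : ℝ) : ℂ) * ((Real.sqrt 2 : ℝ) : ℂ) = 2 := by
    norm_cast
    rw [Real.mul_self_sqrt (by norm_num)]
  simp only [phiv, dotProduct, Matrix.mulVec, Fin.sum_univ_two, Pi.star_apply,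
    Matrix.cons_val_zero, Matrix.cons_val_one, Matrix.head_cons, Complex.star_def,
    map_div₀, Complex.conj_ofReal, _root_.map_one]
  have hfact : Complex.I ^ ((k:ℕ) * 2) * (-1 : ℂ) ^ (k:ℕ) = 1 := by
    rw [mul_comm ((k:ℕ)) 2, pow_mul, Complex.I_sq, ← pow_add, ← two_mul, pow_mul]
    norm_num
  field_simp
  ring_nf
  rw [show ((Real.sqrt 2 : ℝ) : ℂ)^2 = 2 by rw [sq]; exact hs2]
  have hconj : (starRingEnd ℂ) (Complex.I ^ (k:ℕ)) = Complex.I ^ (k:ℕ) * (-1 : ℂ) ^ (k:ℕ) := by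
    rw [map_pow, Complex.conj_I, neg_pow]; ring
  linear_combination (2 * Complex.I ^ (k:ℕ) * ρ 1 1) * hconj + (2 * ρ 1 1) * hfact

lemma pk0 (ρ : Matrix (Fin 2) (Fin 2) ℂ) (htr : ρ 0 0 + ρ 1 1 = 1)
    (hherm : ρ 1 0 = (starRingEnd ℂ) (ρ 0 1)) :
    pk ρ 0 = (1 + 2 * (ρ 0 1).re) / 4 := by
  have hc := Complex.add_conj (ρ 0 1)
  have h0 : star (phiv 0) ⬝ᵥ ρ.mulVec (phiv 0) = (((1 + 2 * (ρ 0 1).re) / 2 : ℝ) : ℂ) := by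
    rw [quad, show ((0 : Fin 4) : ℕ) = 0 from rfl, pow_zero, _root_.map_one, one_mul, one_mul, hherm]
    push_cast at hc ⊢
    linear_combination (htr + hc) / 2
  unfold pk
  rw [h0, Complex.ofReal_re]
  ring

lemma pk1 (ρ : Matrix (Fin 2) (Fin 2) ℂ) (htr : ρ 0 0 + ρ 1 1 = 1)
    (hherm : ρ 1 0 = (starRingEnd ℂ) (ρ 0 1)) :
    pk ρ 1 = (1 - 2 * (ρ 0 1).im) / 4 := by
  have hc := Complex.add_conj (Complex.I * ρ 0 1)
  rw [_root_.map_mul, Complex.conj_I] at hc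
  simp only [Complex.mul_re, Complex.I_re, Complex.I_im] at hc
  have h0 : star (phiv 1) ⬝ᵥ ρ.mulVec (phiv 1) = (((1 - 2 * (ρ 0 1).im) / 2 : ℝ) : ℂ) := by
    rw [quad, show ((1 : Fin 4) : ℕ) = 1 from rfl, pow_one, Complex.conj_I, hherm]
    push_cast at hc ⊢
    linear_combination (htr + hc) / 2
  unfold pk
  rw [h0, Complex.ofReal_re]
  ring

lemma pk2 (ρ : Matrix (Fin 2) (Fin 2) ℂ) (htr : ρ 0 0 + ρ 1 1 = 1)
    (hherm : ρ 1 0 = (starRingEnd ℂ) (ρ 0 1)) :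
    pk ρ 2 = (1 - 2 * (ρ 0 1).re) / 4 := by
  have hc := Complex.add_conj (ρ 0 1)
  have h0 : star (phiv 2) ⬝ᵥ ρ.mulVec (phiv 2) = (((1 - 2 * (ρ 0 1).re) / 2 : ℝ) : ℂ) := by
    rw [quad, show ((2 : Fin 4) : ℕ) = 2 from rfl, Complex.I_sq, hherm, show (starRingEnd ℂ) (-1 : ℂ) = -1 by simp]
    push_cast at hc ⊢
    linear_combination (htr - hc) / 2
  unfold pk
  rw [h0, Complex.ofReal_re]
  ring

lemma pk3 (ρ : Matrix (Fin 2) (Fin 2) ℂ) (htr : ρ 0 0 + ρ 1 1 = 1)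
    (hherm : ρ 1 0 = (starRingEnd ℂ) (ρ 0 1)) :
    pk ρ 3 = (1 + 2 * (ρ 0 1).im) / 4 := by
  have hc := Complex.add_conj (Complex.I * ρ 0 1)
  rw [_root_.map_mul, Complex.conj_I] at hc
  simp only [Complex.mul_re, Complex.I_re, Complex.I_im] at hc
  have h0 : star (phiv 3) ⬝ᵥ ρ.mulVec (phiv 3) = (((1 + 2 * (ρ 0 1).im) / 2 : ℝ) : ℂ) := by
    rw [quad, show ((3 : Fin 4) : ℕ) = 3 from rfl,
      show Complex.I ^ 3 = -Complex.I by rw [pow_succ, Complex.I_sq]; ring, hherm, map_neg, Complex.conj_I]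
    push_cast at hc ⊢
    linear_combination (htr - hc) / 2
  unfold pk
  rw [h0, Complex.ofReal_re]
  ring


open ComplexConjugate in
lemma key_c (a b a' b' : ℂ) (e1 : conj a * a + conj b * b = 1)
    (e2 : conj a' * a' + conj b' * b' = 1) (e3 : conj a * a' + conj b * b' = 0) :
    a' * conj b' = -(a * conj b) := by
  have e3' : a * conj a' + b * conj b' = 0 := by
    have h := congrArg conj e3
    simpa using h
  by_cases hb : b = 0
  · have hcb : conj b = 0 := by rw [hb]; simp
    rw [hcb] at e1 e3
    have hca : conj a * a' = 0 := by linear_combination e3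
    linear_combination (a * conj b') * hca - (a' * conj b') * e1 + a * hcb
  · have hsq : conj a * a * (conj a' * a') = conj b * b * (conj b' * b') := by
      linear_combination (a * conj a') * e3 - (conj b * b') * e3'
    have hnorm : conj a' * a' = conj b * b := by
      linear_combination hsq - (conj a' * a') * e1 + (conj b * b) * e2
    have goal' : (a' * conj b' + a * conj b) * b = 0 := by
      linear_combination a' * e3' - a * hnorm
    rcases mul_eq_zero.1 goal' with h | h
    · linear_combination h
    · exact absurd h hb

open ComplexConjugate

theorem stmt13 (ψ ψ' : Fin 2 → ℂ) (hψ : star ψ ⬝ᵥ ψ = 1) (hψ' : star ψ' ⬝ᵥ ψ' = 1)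
    (horth : star ψ ⬝ᵥ ψ' = 0) (l : ℝ) (hl : l ∈ Set.Icc (0 : ℝ) 1)
    (ρ : Matrix (Fin 2) (Fin 2) ℂ) (hρ : ρ = l • outer ψ + (1 - l) • outer ψ') :
    (3 / 2 - binEnt l / 2 ≤ H4 ρ - binEnt l ∧ H4 ρ - binEnt l ≤ 2 - binEnt l) ∧
      (3 / 2 + binEnt l / 2 ≤ H4 ρ ∧ H4 ρ ≤ 2) := by
  obtain ⟨hl0, hl1⟩ := hl
  have e1 : conj (ψ 0) * ψ 0 + conj (ψ 1) * ψ 1 = 1 := by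
    simpa [dotProduct, Fin.sum_univ_two, Pi.star_apply, Complex.star_def] using hψ
  have e2 : conj (ψ' 0) * ψ' 0 + conj (ψ' 1) * ψ' 1 = 1 := by
    simpa [dotProduct, Fin.sum_univ_two, Pi.star_apply, Complex.star_def] using hψ'
  have e3 : conj (ψ 0) * ψ' 0 + conj (ψ 1) * ψ' 1 = 0 := by
    simpa [dotProduct, Fin.sum_univ_two, Pi.star_apply, Complex.star_def] using horth
  have hent : ∀ i j, ρ i j = (l:ℂ) * (ψ i * conj (ψ j)) + (1 - (l:ℂ)) * (ψ' i * conj (ψ' j)) := by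
    intro i j
    rw [hρ]
    simp [outer, Matrix.vecMulVec_apply, Matrix.add_apply, Matrix.smul_apply,
      Complex.real_smul, Pi.star_apply, Complex.star_def]
    try push_cast
    try ring
  have htr : ρ 0 0 + ρ 1 1 = 1 := by
    rw [hent, hent]
    linear_combination (l:ℂ) * e1 + (1 - (l:ℂ)) * e2
  have hherm : ρ 1 0 = conj (ρ 0 1) := by
    rw [hent, hent]
    simp only [map_add, _root_.map_mul, map_sub, _root_.map_one, Complex.conj_conj,
      Complex.conj_ofReal]
    try ring
  have hc : ρ 0 1 = ((2*l - 1 : ℝ):ℂ) * (ψ 0 * conj (ψ 1)) := by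
    have hk := key_c (ψ 0) (ψ 1) (ψ' 0) (ψ' 1) e1 e2 e3
    rw [hent]
    push_cast
    linear_combination (1 - (l:ℂ)) * hk
  have hsumn : Complex.normSq (ψ 0) + Complex.normSq (ψ 1) = 1 := by
    have h := e1
    rw [mul_comm (conj (ψ 0)) (ψ 0), mul_comm (conj (ψ 1)) (ψ 1),
      Complex.mul_conj, Complex.mul_conj] at h
    exact_mod_cast h
  set x : ℝ := (ρ 0 1).re with hx
  set y : ℝ := (ρ 0 1).im with hy
  have hnval : x^2 + y^2 = (2*l-1)^2 * (Complex.normSq (ψ 0) * Complex.normSq (ψ 1)) := by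
    have : Complex.normSq (ρ 0 1) = (2*l-1)^2 * (Complex.normSq (ψ 0) * Complex.normSq (ψ 1)) := by
      rw [hc, _root_.map_mul, _root_.map_mul, Complex.normSq_ofReal, Complex.normSq_conj]
      ring
    rw [← this, Complex.normSq_apply]
    ring
  have hbnd : (2*x)^2 + (2*y)^2 ≤ (2*l-1)^2 := by
    have h4 : 4 * (Complex.normSq (ψ 0) * Complex.normSq (ψ 1)) ≤ 1 := by
      nlinarith [sq_nonneg (Complex.normSq (ψ 0) - Complex.normSq (ψ 1))]
    nlinarith [Complex.normSq_nonneg (ψ 0), Complex.normSq_nonneg (ψ 1),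
      mul_nonneg (sq_nonneg (2*l-1)) (sq_nonneg (Complex.normSq (ψ 0) - Complex.normSq (ψ 1)))]
  have hr1 : (2*l-1)^2 ≤ 1 := by nlinarith
  have hxb : -1 ≤ 2*x ∧ 2*x ≤ 1 := by constructor <;> nlinarith [sq_nonneg (2*y)]
  have hyb : -1 ≤ 2*y ∧ 2*y ≤ 1 := by constructor <;> nlinarith [sq_nonneg (2*x)]
  have hH : H4 ρ = 2 - (Dl (2*x) + Dl (2*y)) / (4 * Real.log 2) := by
    have P1 := pair_id hxb.1 hxb.2
    have P2 := pair_id hyb.1 hyb.2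
    unfold H4
    rw [Fin.sum_univ_four, pk0 ρ htr hherm, pk1 ρ htr hherm, pk2 ρ htr hherm, pk3 ρ htr hherm]
    rw [← hx, ← hy]
    have hsplit : (Dl (2*x) + Dl (2*y)) / (4 * Real.log 2)
        = Dl (2*x) / (4 * Real.log 2) + Dl (2*y) / (4 * Real.log 2) := add_div _ _ _
    linarith [P1, P2]
  have hB : binEnt l = 1 - Dl (2*l-1) / (2 * Real.log 2) := binEnt_id hl0 hl1
  have habs1 : |2*l-1| ≤ 1 := abs_le.2 ⟨by linarith, by linarith⟩
  have hkey : Dl (2*x) + Dl (2*y) ≤ Dl (2*l-1) := by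
    have h := core2 (a := 2*x) (b := 2*y) (r := |2*l-1|)
      (by rw [sq_abs]; exact hbnd) (abs_nonneg _) habs1
    rwa [Dl_abs] at h
  have n1 : 0 ≤ Dl (2*x) := Dl_nonneg hxb.1 hxb.2
  have n2 : 0 ≤ Dl (2*y) := Dl_nonneg hyb.1 hyb.2
  have hL : (0:ℝ) < Real.log 2 := log2_pos
  have d1 : (Dl (2*x) + Dl (2*y)) / (4 * Real.log 2) ≤ Dl (2*l-1) / (4 * Real.log 2) := by
    gcongr
  have d0 : 0 ≤ (Dl (2*x) + Dl (2*y)) / (4 * Real.log 2) := by positivity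
  have dr : Dl (2*l-1) / (2 * Real.log 2) = 2 * (Dl (2*l-1) / (4 * Real.log 2)) := by
    field_simp
    ring
  refine ⟨⟨by linarith, by linarith⟩, by linarith, by linarith⟩
end

section
/- Let U be a 2×2 unitary matrix, let ψ, ψ' be orthonormal vectors in ℂ², let λ ∈ [0,1], and set ρ = λ|ψ⟩⟨ψ| + (1−λ)|ψ'⟩⟨ψ'|. Then C_{E,r}(UρU†) − C_{E,r}(ρ) = H[{p_k(UρU†)}] − H[{p_k(ρ)}] ≤ 1/2 − h(λ)/2 ≤ 1/2. In particular, no unitary channel can increase the POVM-based coherence by more than 1/2 on any qubit state. -/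
open Matrix ComplexOrder

open Real

private lemma auxDeriv (v : ℝ) (hv : 0 < v) :
    HasDerivAt (fun v : ℝ => (v - v⁻¹)/2 - Real.log v) ((1 - -(v^2)⁻¹)/2 - v⁻¹) v :=
  (((hasDerivAt_id v).sub (hasDerivAt_inv hv.ne')).div_const 2).sub (Real.hasDerivAt_log hv.ne')

private lemma aux_log_le (v : ℝ) (hv : 1 ≤ v) : Real.log v ≤ (v - v⁻¹)/2 := by
  have hmono : MonotoneOn (fun v : ℝ => (v - v⁻¹)/2 - Real.log v) (Set.Ici 1) := by
    apply monotoneOn_of_deriv_nonneg (convex_Ici 1)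
    · intro x hx
      have hx1 : (0:ℝ) < x := lt_of_lt_of_le one_pos hx
      exact (auxDeriv x hx1).continuousAt.continuousWithinAt
    · intro x hx
      rw [interior_Ici] at hx
      have hx1 : (0:ℝ) < x := lt_trans one_pos hx
      exact (auxDeriv x hx1).differentiableAt.differentiableWithinAt
    · intro x hx
      rw [interior_Ici] at hx
      have hx1 : (0:ℝ) < x := lt_trans one_pos hx
      rw [(auxDeriv x hx1).deriv]
      have h2 : (0:ℝ) < x^2 := by positivity
      have h3 : x⁻¹ = x/x^2 := by field_simp
      have h4 : (x^2)⁻¹ = 1/x^2 := by field_simp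
      rw [h3, h4]
      rw [sub_nonneg, div_le_div_iff₀ h2 (by norm_num : (0:ℝ) < 2)]
      have h5 : (1 - -(1/x^2)) * x^2 = x^2 + 1 := by field_simp; ring
      rw [h5]
      nlinarith [sq_nonneg (x-1)]
  have h1 : (fun v : ℝ => (v - v⁻¹)/2 - Real.log v) 1 ≤ (fun v : ℝ => (v - v⁻¹)/2 - Real.log v) v :=
    hmono (by simp) hv hv
  simp at h1
  linarith

private lemma aux_L_le (u : ℝ) (hu0 : 0 ≤ u) (hu1 : u < 1) :
    Real.log (1+u) - Real.log (1-u) ≤ 2*u/(1-u^2) := by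
  have h1 : (0:ℝ) < 1 + u := by linarith
  have h2 : (0:ℝ) < 1 - u := by linarith
  have hv : 1 ≤ (1+u)/(1-u) := by rw [le_div_iff₀ h2]; linarith
  have := aux_log_le ((1+u)/(1-u)) hv
  rw [Real.log_div h1.ne' h2.ne'] at this
  refine this.trans (le_of_eq ?_)
  have hu2 : 1 - u^2 ≠ 0 := by nlinarith
  field_simp
  ring

/-- the function `(log(1+u) - log(1-u))/u` is monotone on `(0,1)`. -/
private lemma aux_M_mono : MonotoneOn (fun u : ℝ => (Real.log (1+u) - Real.log (1-u))/u)
    (Set.Ioo 0 1) := by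
  have hder : ∀ u ∈ Set.Ioo (0:ℝ) 1,
      HasDerivAt (fun u : ℝ => (Real.log (1+u) - Real.log (1-u))/u)
        ((((1:ℝ)/(1+u) - (-1)/(1-u)) * u - (Real.log (1+u) - Real.log (1-u)) * 1)/u^2) u := by
    intro u hu
    obtain ⟨hu0, hu1⟩ := hu
    have h1 : (0:ℝ) < 1 + u := by linarith
    have h2 : (0:ℝ) < 1 - u := by linarith
    have d1 : HasDerivAt (fun u : ℝ => Real.log (1+u)) (1/(1+u)) u := by
      simpa using (((hasDerivAt_id u).const_add 1).log h1.ne')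
    have d2 : HasDerivAt (fun u : ℝ => Real.log (1-u)) ((-1)/(1-u)) u := by
      simpa using (((hasDerivAt_id u).const_sub 1).log h2.ne')
    exact (d1.sub d2).div (hasDerivAt_id u) hu0.ne'
  apply monotoneOn_of_deriv_nonneg (convex_Ioo 0 1)
  · intro x hx; exact (hder x hx).continuousAt.continuousWithinAt
  · intro x hx
    rw [interior_Ioo] at hx
    exact (hder x hx).differentiableAt.differentiableWithinAt
  · intro x hx
    rw [interior_Ioo] at hx
    rw [(hder x hx).deriv]
    obtain ⟨hx0, hx1⟩ := hx
    have h1 : (0:ℝ) < 1 + x := by linarith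
    have h2 : (0:ℝ) < 1 - x := by linarith
    have hL := aux_L_le x hx0.le hx1
    have hx2 : (0:ℝ) < x^2 := by positivity
    apply div_nonneg _ hx2.le
    rw [sub_nonneg, mul_one]
    have he : ((1:ℝ)/(1+x) - (-1)/(1-x)) * x = 2*x/(1-x^2) := by
      have : (1:ℝ) - x^2 ≠ 0 := by nlinarith
      field_simp
      ring
    rw [he]
    exact hL

noncomputable def gfun (t : ℝ) : ℝ := Real.binEntropy ((1 + Real.sqrt t)/2)

private lemma gfun_hasDeriv (t : ℝ) (ht : t ∈ Set.Ioo (0:ℝ) 1) :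
    HasDerivAt gfun (-((Real.log (1+Real.sqrt t) - Real.log (1-Real.sqrt t))/Real.sqrt t)/4) t := by
  obtain ⟨ht0, ht1⟩ := ht
  set u := Real.sqrt t with hu
  have hu0 : 0 < u := Real.sqrt_pos.mpr ht0
  have hu1 : u < 1 := by
    rw [hu, show (1:ℝ) = Real.sqrt 1 by simp]
    exact Real.sqrt_lt_sqrt ht0.le ht1
  have h1 : (0:ℝ) < 1 + u := by linarith
  have h2 : (0:ℝ) < 1 - u := by linarith
  have hp0 : (1 + u)/2 ≠ 0 := by positivity
  have hp1 : (1 + u)/2 ≠ 1 := by intro h; rw [div_eq_one_iff_eq (by norm_num)] at h; linarith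
  have dinner : HasDerivAt (fun t : ℝ => (1 + Real.sqrt t)/2) (1/(2*u)/2) t :=
    ((Real.hasDerivAt_sqrt ht0.ne').const_add 1).div_const 2
  have douter := Real.hasDerivAt_binEntropy hp0 hp1
  have := douter.comp t dinner
  refine this.congr_deriv ?_
  have : 1 - (1+u)/2 = (1-u)/2 := by ring
  rw [this, Real.log_div h2.ne' (by norm_num), Real.log_div h1.ne' (by norm_num)]
  ring

private lemma gfun_concave : ConcaveOn ℝ (Set.Icc 0 1) gfun := by
  apply AntitoneOn.concaveOn_of_deriv (convex_Icc 0 1)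
  · apply Continuous.continuousOn
    exact Real.binEntropy_continuous.comp (by fun_prop)
  · intro x hx
    rw [interior_Icc] at hx
    exact (gfun_hasDeriv x hx).differentiableAt.differentiableWithinAt
  · intro x hx y hy hxy
    rw [interior_Icc] at hx hy
    rw [(gfun_hasDeriv x hx).deriv, (gfun_hasDeriv y hy).deriv]
    have h1 : Real.sqrt x ∈ Set.Ioo (0:ℝ) 1 := by
      constructor
      · exact Real.sqrt_pos.mpr hx.1
      · rw [show (1:ℝ) = Real.sqrt 1 by simp]; exact Real.sqrt_lt_sqrt hx.1.le hx.2
    have h2 : Real.sqrt y ∈ Set.Ioo (0:ℝ) 1 := by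
      constructor
      · exact Real.sqrt_pos.mpr hy.1
      · rw [show (1:ℝ) = Real.sqrt 1 by simp]; exact Real.sqrt_lt_sqrt hy.1.le hy.2
    have := aux_M_mono h1 h2 (Real.sqrt_le_sqrt hxy)
    simp only at this
    linarith

private lemma gfun_anti : AntitoneOn gfun (Set.Icc 0 1) := by
  apply antitoneOn_of_deriv_nonpos (convex_Icc 0 1)
  · apply Continuous.continuousOn
    exact Real.binEntropy_continuous.comp (by fun_prop)
  · intro x hx
    rw [interior_Icc] at hx
    exact (gfun_hasDeriv x hx).differentiableAt.differentiableWithinAt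
  · intro x hx
    rw [interior_Icc] at hx
    rw [(gfun_hasDeriv x hx).deriv]
    have hu0 : 0 < Real.sqrt x := Real.sqrt_pos.mpr hx.1
    have hu1 : Real.sqrt x < 1 := by
      rw [show (1:ℝ) = Real.sqrt 1 by simp]; exact Real.sqrt_lt_sqrt hx.1.le hx.2
    have hlog : Real.log (1 - Real.sqrt x) ≤ Real.log (1 + Real.sqrt x) :=
      Real.log_le_log (by linarith) (by linarith)
    have : 0 ≤ (Real.log (1+Real.sqrt x) - Real.log (1-Real.sqrt x))/Real.sqrt x :=
      div_nonneg (by linarith) hu0.le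
    linarith

private lemma gfun_zero : gfun 0 = Real.log 2 := by
  unfold gfun
  rw [Real.sqrt_zero, show (1+0:ℝ)/2 = 2⁻¹ by norm_num, Real.binEntropy_two_inv]


private lemma gfun_combo (t s : ℝ) (ht : 0 ≤ t) (hs : 0 ≤ s) (hts : t + s ≤ 1) :
    Real.log 2 + gfun (t+s) ≤ gfun t + gfun s := by
  rcases eq_or_lt_of_le (by linarith : (0:ℝ) ≤ t + s) with h | h
  · have ht0 : t = 0 := by linarith
    have hs0 : s = 0 := by linarith
    simp [ht0, hs0, gfun_zero]
  · set c := t + s with hc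
    have hmem0 : (0:ℝ) ∈ Set.Icc (0:ℝ) 1 := by constructor <;> norm_num
    have hmemc : c ∈ Set.Icc (0:ℝ) 1 := ⟨by linarith, hts⟩
    have w1 : (0:ℝ) ≤ s/c := by positivity
    have w2 : (0:ℝ) ≤ t/c := by positivity
    have hsum : s/c + t/c = 1 := by field_simp; rw [hc]; ring
    have h1 := gfun_concave.2 hmem0 hmemc w1 w2 hsum
    have h2 := gfun_concave.2 hmem0 hmemc w2 w1 (by linarith)
    simp only [smul_eq_mul, mul_zero, zero_add] at h1 h2
    have e1 : t/c * c = t := by field_simp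
    have e2 : s/c * c = s := by field_simp
    rw [e1, gfun_zero] at h1
    rw [e2, gfun_zero] at h2
    have : s/c * gfun 0 + t/c * gfun c + (t/c * gfun 0 + s/c * gfun c) =
        gfun 0 + gfun c := by
      field_simp
      ring
    rw [gfun_zero] at this
    linarith


private lemma binEnt_eq (p : ℝ) : binEnt p = Real.binEntropy p / Real.log 2 := by
  simp only [binEnt, ent2, Real.binEntropy, Real.logb, Real.log_inv]
  ring

private lemma binEnt_symm (p : ℝ) : binEnt (1 - p) = binEnt p := by
  rw [binEnt_eq, binEnt_eq, Real.binEntropy_one_sub]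

private lemma binEnt_le_one (p : ℝ) : binEnt p ≤ 1 := by
  rw [binEnt_eq]
  have h2 : 0 < Real.log 2 := Real.log_pos one_lt_two
  rw [div_le_one h2]
  exact Real.binEntropy_le_log_two

private lemma binEnt_nonneg (p : ℝ) (h0 : 0 ≤ p) (h1 : p ≤ 1) : 0 ≤ binEnt p := by
  rw [binEnt_eq]
  exact div_nonneg (Real.binEntropy_nonneg h0 h1) (Real.log_pos one_lt_two).le

private lemma binEnt_sq (x : ℝ) : binEnt ((1 + x)/2) = gfun (x^2) / Real.log 2 := by
  unfold gfun
  rw [Real.sqrt_sq_eq_abs]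
  rcases le_or_gt 0 x with h | h
  · rw [abs_of_nonneg h, binEnt_eq]
  · rw [abs_of_neg h]
    rw [show (1 + -x)/2 = 1 - (1+x)/2 by ring, Real.binEntropy_one_sub ((1+x)/2)]
    rw [binEnt_eq]

/-- The core inequality. -/
private lemma core_ineq (X Y w : ℝ) (hXY : X^2 + Y^2 ≤ w^2) (hw : w^2 ≤ 1) :
    1 + binEnt ((1+w)/2) ≤ binEnt ((1+X)/2) + binEnt ((1+Y)/2) := by
  have h2 : 0 < Real.log 2 := Real.log_pos one_lt_two
  have hX2 : (0:ℝ) ≤ X^2 := sq_nonneg X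
  have hY2 : (0:ℝ) ≤ Y^2 := sq_nonneg Y
  have h1 : Real.log 2 + gfun (X^2 + Y^2) ≤ gfun (X^2) + gfun (Y^2) :=
    gfun_combo _ _ hX2 hY2 (le_trans hXY hw)
  have h3 : gfun (w^2) ≤ gfun (X^2 + Y^2) :=
    gfun_anti ⟨by linarith, le_trans hXY hw⟩ ⟨by positivity, hw⟩ hXY
  rw [binEnt_sq, binEnt_sq, binEnt_sq]
  rw [show (1:ℝ) = Real.log 2 / Real.log 2 by field_simp]
  rw [← add_div, ← add_div, div_le_div_iff₀ h2 h2]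
  nlinarith [h1, h3, h2]

private lemma ent2_half_s15 (y : ℝ) : ent2 (y/2) = y/2 + ent2 y / 2 := by
  rcases eq_or_ne y 0 with h | h
  · simp [h, ent2]
  · unfold ent2
    rw [Real.logb_div h (by norm_num), Real.logb_self_eq_one (by norm_num)]
    ring



private lemma outer_conj (U : Matrix (Fin 2) (Fin 2) ℂ) (v : Fin 2 → ℂ) :
    U * outer v * Uᴴ = outer (U.mulVec v) := by
  ext i j
  simp [outer, Matrix.mul_apply, vecMulVec_apply, Matrix.mulVec, dotProduct,
    Fin.sum_univ_two, Matrix.conjTranspose_apply, _root_.map_add, _root_.map_mul]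
  fin_cases i <;> fin_cases j <;> simp <;> ring

private lemma unitary_dot (U : Matrix (Fin 2) (Fin 2) ℂ)
    (hU : U ∈ Matrix.unitaryGroup (Fin 2) ℂ) (v w : Fin 2 → ℂ) :
    star (U.mulVec v) ⬝ᵥ U.mulVec w = star v ⬝ᵥ w := by
  have h1 : Uᴴ * U = 1 := by
    have := hU.1
    rwa [Matrix.star_eq_conjTranspose] at this
  rw [Matrix.star_mulVec, ← Matrix.dotProduct_mulVec, Matrix.mulVec_mulVec, h1,
    Matrix.one_mulVec]

set_option maxHeartbeats 2000000 in
private lemma key (ψ ψ' : Fin 2 → ℂ) (hψ : star ψ ⬝ᵥ ψ = 1) (hψ' : star ψ' ⬝ᵥ ψ' = 1)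
    (horth : star ψ ⬝ᵥ ψ' = 0) (l : ℝ) (hl0 : 0 ≤ l) (hl1 : l ≤ 1)
    (ρ : Matrix (Fin 2) (Fin 2) ℂ) (hρ : ρ = l • outer ψ + (1 - l) • outer ψ') :
    3/2 + binEnt l / 2 ≤ H4 ρ ∧ H4 ρ ≤ 2 := by
  have hent : ∀ i j, ρ i j = (l:ℂ) * (ψ i * (starRingEnd ℂ) (ψ j))
      + (1-(l:ℂ)) * (ψ' i * (starRingEnd ℂ) (ψ' j)) := by
    intro i j
    rw [hρ]
    simp [outer, vecMulVec_apply, Matrix.add_apply, Matrix.smul_apply, Complex.real_smul,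
      Complex.star_def]
  have hψe : (starRingEnd ℂ) (ψ 0) * ψ 0 + (starRingEnd ℂ) (ψ 1) * ψ 1 = 1 := by
    simpa [dotProduct, Fin.sum_univ_two, Complex.star_def] using hψ
  have hψ'e : (starRingEnd ℂ) (ψ' 0) * ψ' 0 + (starRingEnd ℂ) (ψ' 1) * ψ' 1 = 1 := by
    simpa [dotProduct, Fin.sum_univ_two, Complex.star_def] using hψ'
  have horthe : (starRingEnd ℂ) (ψ 0) * ψ' 0 + (starRingEnd ℂ) (ψ 1) * ψ' 1 = 0 := by
    simpa [dotProduct, Fin.sum_univ_two, Complex.star_def] using horth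
  have horthe2 : (starRingEnd ℂ) (ψ' 0) * ψ 0 + (starRingEnd ℂ) (ψ' 1) * ψ 1 = 0 := by
    have := congrArg (starRingEnd ℂ) horthe
    simp only [_root_.map_add, _root_.map_mul, Complex.conj_conj, map_zero] at this
    linear_combination this
  have htrC : ρ 0 0 + ρ 1 1 = 1 := by
    rw [hent 0 0, hent 1 1]
    linear_combination (l:ℂ) * hψe + (1-(l:ℂ)) * hψ'e
  have hherm : ρ 1 0 = (starRingEnd ℂ) (ρ 0 1) := by
    rw [hent 1 0, hent 0 1]
    simp only [_root_.map_add, _root_.map_mul, Complex.conj_conj, map_sub, _root_.map_one,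
      Complex.conj_ofReal]
    ring
  have him0 : (ρ 0 0).im = 0 := by
    rw [hent 0 0]
    simp [Complex.add_im, Complex.mul_im, Complex.mul_re, Complex.conj_re, Complex.conj_im,
      Complex.ofReal_re, Complex.ofReal_im, Complex.sub_re, Complex.sub_im]
    ring
  have him1 : (ρ 1 1).im = 0 := by
    rw [hent 1 1]
    simp [Complex.add_im, Complex.mul_im, Complex.mul_re, Complex.conj_re, Complex.conj_im,
      Complex.ofReal_re, Complex.ofReal_im, Complex.sub_re, Complex.sub_im]
    ring
  have htr_re : (ρ 0 0).re + (ρ 1 1).re = 1 := by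
    have := congrArg Complex.re htrC
    simpa using this
  set X : ℝ := 2*(ρ 0 1).re with hX
  set Y : ℝ := -2*(ρ 0 1).im with hY
  have hQ : 4 * (ρ 0 1 * ρ 1 0) + (ρ 0 0 - ρ 1 1) * (ρ 0 0 - ρ 1 1)
      = ((((2*l-1)^2 : ℝ)) : ℂ) := by
    rw [hent 0 1, hent 1 0, hent 0 0, hent 1 1]
    push_cast
    linear_combination (2*(l:ℂ) + (l:ℂ)*((l:ℂ)*((starRingEnd ℂ) (ψ 0) * ψ 0 + (starRingEnd ℂ) (ψ 1) * ψ 1 - 1) + (1-(l:ℂ))*((starRingEnd ℂ) (ψ' 0) * ψ' 0 + (starRingEnd ℂ) (ψ' 1) * ψ' 1 - 1)) - 4*(l:ℂ)*(1-(l:ℂ))*((starRingEnd ℂ) (ψ' 0) * ψ' 0 + (starRingEnd ℂ) (ψ' 1) * ψ' 1)) * hψe + (2*(1-(l:ℂ)) + (1-(l:ℂ))*((l:ℂ)*((starRingEnd ℂ) (ψ 0) * ψ 0 + (starRingEnd ℂ) (ψ 1) * ψ 1 - 1) + (1-(l:ℂ))*((starRingEnd ℂ) (ψ' 0) * ψ'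 0 + (starRingEnd ℂ) (ψ' 1) * ψ' 1 - 1)) - 4*(l:ℂ)*(1-(l:ℂ))) * hψ'e + (4*(l:ℂ)*(1-(l:ℂ))*((starRingEnd ℂ) (ψ' 0) * ψ 0 + (starRingEnd ℂ) (ψ' 1) * ψ 1)) * horthe
  have hre := congrArg Complex.re hQ
  rw [hherm] at hre
  simp only [Complex.add_re, Complex.mul_re, Complex.mul_im, Complex.sub_re, Complex.sub_im,
    Complex.conj_re, Complex.conj_im, Complex.ofReal_re, Complex.ofReal_im, him0, him1,
    Complex.re_ofNat, Complex.im_ofNat] at hre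
  have hreal : X^2 + Y^2 + ((ρ 0 0).re - (ρ 1 1).re)^2 = (2*l-1)^2 := by
    rw [hX, hY]; nlinarith [hre]
  have hXYle : X^2 + Y^2 ≤ (2*l-1)^2 := by nlinarith [sq_nonneg ((ρ 0 0).re - (ρ 1 1).re)]
  have hw1 : (2*l-1)^2 ≤ 1 := by nlinarith
  have hXm : -1 ≤ X ∧ X ≤ 1 := by constructor <;> nlinarith [sq_nonneg Y]
  have hYm : -1 ≤ Y ∧ Y ≤ 1 := by constructor <;> nlinarith [sq_nonneg X]
  -- the four probabilities
  -- dot product expansions for `phiv`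
  have hs2 : ((Real.sqrt 2 : ℝ) : ℂ) * ((Real.sqrt 2 : ℝ) : ℂ) = 2 := by
    rw [← Complex.ofReal_mul, Real.mul_self_sqrt (by norm_num : (0:ℝ) ≤ 2)]
    norm_num
  have hs2ne : ((Real.sqrt 2 : ℝ) : ℂ) ≠ 0 := by
    simpa using Complex.ofReal_ne_zero.mpr (Real.sqrt_ne_zero'.mpr (by norm_num))
  have hd0 : 2 * (star (phiv 0) ⬝ᵥ ρ.mulVec (phiv 0)) = ρ 0 0 + ρ 0 1 + ρ 1 0 + ρ 1 1 := by
    simp only [phiv, dotProduct, Matrix.mulVec, Fin.sum_univ_two, Pi.star_apply,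
      Complex.star_def, map_div₀, _root_.map_one, Complex.conj_ofReal,
      Matrix.cons_val_zero, Matrix.cons_val_one, Matrix.head_cons, map_pow, Complex.conj_I,
      Fin.isValue, pow_zero, Fin.val_zero]
    field_simp
    linear_combination (-(ρ 0 0 + ρ 0 1 + ρ 1 0 + ρ 1 1)) * hs2
  have hv1 : ((1:Fin 4):ℕ) = 1 := rfl
  have hv2 : ((2:Fin 4):ℕ) = 2 := rfl
  have hv3 : ((3:Fin 4):ℕ) = 3 := rfl
  have hI2 : Complex.I^(2:ℕ) = -1 := Complex.I_sq
  have hI3 : Complex.I^(3:ℕ) = -Complex.I := by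
    rw [pow_succ, hI2]; ring
  have hd1 : 2 * (star (phiv 1) ⬝ᵥ ρ.mulVec (phiv 1))
      = ρ 0 0 + Complex.I * ρ 0 1 - Complex.I * ρ 1 0 + ρ 1 1 := by
    simp only [phiv, dotProduct, Matrix.mulVec, Fin.sum_univ_two, Pi.star_apply,
      Complex.star_def, map_div₀, _root_.map_one, Complex.conj_ofReal,
      Matrix.cons_val_zero, Matrix.cons_val_one, Matrix.head_cons, map_pow, Complex.conj_I,
      Fin.isValue, hv1, pow_one]
    field_simp
    linear_combination (-(ρ 0 0 + Complex.I * ρ 0 1 - Complex.I * ρ 1 0 + ρ 1 1)) * hs2 + (-2*ρ 1 1) * hI2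
  have hd2 : 2 * (star (phiv 2) ⬝ᵥ ρ.mulVec (phiv 2))
      = ρ 0 0 - ρ 0 1 - ρ 1 0 + ρ 1 1 := by
    simp only [phiv, dotProduct, Matrix.mulVec, Fin.sum_univ_two, Pi.star_apply,
      Complex.star_def, map_div₀, _root_.map_one, Complex.conj_ofReal,
      Matrix.cons_val_zero, Matrix.cons_val_one, Matrix.head_cons, map_pow, Complex.conj_I,
      Fin.isValue, hv2, hI2, map_neg]
    field_simp
    linear_combination (-(ρ 0 0 - ρ 0 1 - ρ 1 0 + ρ 1 1)) * hs2
  have hd3 : 2 * (star (phiv 3) ⬝ᵥ ρ.mulVec (phiv 3))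
      = ρ 0 0 - Complex.I * ρ 0 1 + Complex.I * ρ 1 0 + ρ 1 1 := by
    simp only [phiv, dotProduct, Matrix.mulVec, Fin.sum_univ_two, Pi.star_apply,
      Complex.star_def, map_div₀, _root_.map_one, Complex.conj_ofReal,
      Matrix.cons_val_zero, Matrix.cons_val_one, Matrix.head_cons, map_pow, Complex.conj_I,
      Fin.isValue, hv3, hI3, map_neg]
    field_simp
    linear_combination (-(ρ 0 0 - Complex.I * ρ 0 1 + Complex.I * ρ 1 0 + ρ 1 1)) * hs2 + (-2*ρ 1 1) * hI2
  rw [hherm] at hd0 hd1 hd2 hd3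
  have hp0 : pk ρ 0 = (1 + X)/4 := by
    have h := congrArg Complex.re hd0
    simp only [Complex.add_re, Complex.sub_re, Complex.mul_re, Complex.re_ofNat,
      Complex.im_ofNat, Complex.conj_re, Complex.conj_im, Complex.I_re, Complex.I_im] at h
    unfold pk
    rw [hX]
    linarith [htr_re]
  have hp1 : pk ρ 1 = (1 + Y)/4 := by
    have h := congrArg Complex.re hd1
    simp only [Complex.add_re, Complex.sub_re, Complex.mul_re, Complex.re_ofNat,
      Complex.im_ofNat, Complex.conj_re, Complex.conj_im, Complex.I_re, Complex.I_im] at h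
    unfold pk
    rw [hY]
    linarith [htr_re]
  have hp2 : pk ρ 2 = (1 - X)/4 := by
    have h := congrArg Complex.re hd2
    simp only [Complex.add_re, Complex.sub_re, Complex.mul_re, Complex.re_ofNat,
      Complex.im_ofNat, Complex.conj_re, Complex.conj_im, Complex.I_re, Complex.I_im] at h
    unfold pk
    rw [hX]
    linarith [htr_re]
  have hp3 : pk ρ 3 = (1 - Y)/4 := by
    have h := congrArg Complex.re hd3
    simp only [Complex.add_re, Complex.sub_re, Complex.mul_re, Complex.re_ofNat,
      Complex.im_ofNat, Complex.conj_re, Complex.conj_im, Complex.I_re, Complex.I_im] at h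
    unfold pk
    rw [hY]
    linarith [htr_re]
  have pair : ∀ x : ℝ, ent2 ((1+x)/4) + ent2 ((1-x)/4) = 1/2 + binEnt ((1+x)/2)/2 := by
    intro x
    have e1 := ent2_half_s15 ((1+x)/2)
    have e2 := ent2_half_s15 ((1-x)/2)
    unfold binEnt
    rw [show (1:ℝ) - (1+x)/2 = (1-x)/2 by ring,
      show (1+x)/4 = ((1+x)/2)/2 by ring, show (1-x)/4 = ((1-x)/2)/2 by ring]
    linear_combination e1 + e2
  have hH : H4 ρ = 1 + (binEnt ((1+X)/2) + binEnt ((1+Y)/2))/2 := by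
    unfold H4
    rw [Fin.sum_univ_four, hp0, hp1, hp2, hp3]
    have h1 := pair X
    have h2 := pair Y
    linarith
  constructor
  · have hc := core_ineq X Y (2*l-1) hXYle hw1
    rw [show (1+(2*l-1))/2 = l by ring] at hc
    linarith
  · have b1 := binEnt_le_one ((1+X)/2)
    have b2 := binEnt_le_one ((1+Y)/2)
    linarith



theorem stmt15 (U : Matrix (Fin 2) (Fin 2) ℂ) (hU : U ∈ Matrix.unitaryGroup (Fin 2) ℂ)
    (ψ ψ' : Fin 2 → ℂ) (hψ : star ψ ⬝ᵥ ψ = 1) (hψ' : star ψ' ⬝ᵥ ψ' = 1)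
    (horth : star ψ ⬝ᵥ ψ' = 0) (l : ℝ) (hl : l ∈ Set.Icc (0 : ℝ) 1)
    (ρ : Matrix (Fin 2) (Fin 2) ℂ) (hρ : ρ = l • outer ψ + (1 - l) • outer ψ') :
    (H4 (U * ρ * Uᴴ) - binEnt l) - (H4 ρ - binEnt l) = H4 (U * ρ * Uᴴ) - H4 ρ ∧
      H4 (U * ρ * Uᴴ) - H4 ρ ≤ 1 / 2 - binEnt l / 2 ∧
      1 / 2 - binEnt l / 2 ≤ 1 / 2 := by
  obtain ⟨hl0, hl1⟩ := hl
  have hσ : U * ρ * Uᴴ = l • outer (U.mulVec ψ) + (1 - l) • outer (U.mulVec ψ') := by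
    rw [hρ, Matrix.mul_add, Matrix.add_mul]
    congr 1
    · rw [Matrix.mul_smul, Matrix.smul_mul, outer_conj]
    · rw [Matrix.mul_smul, Matrix.smul_mul, outer_conj]
  have k1 := key ψ ψ' hψ hψ' horth l hl0 hl1 ρ hρ
  have k2 := key (U.mulVec ψ) (U.mulVec ψ')
    (by rw [unitary_dot U hU]; exact hψ)
    (by rw [unitary_dot U hU]; exact hψ')
    (by rw [unitary_dot U hU]; exact horth) l hl0 hl1 (U * ρ * Uᴴ) hσ
  refine ⟨by ring, ?_, ?_⟩
  · linarith [k1.1, k2.2]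
  · have := binEnt_nonneg l hl0 hl1
    linarith
end
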